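/- Let P ⊆ ℤⁿ be a finitely generated submonoid which generates ℤⁿ as a group, and let σ∨ = ℚ≥0·P ⊆ ℚⁿ be the rational cone generated by P. Then there exists d ∈ P such that (d + σ∨) ∩ ℤⁿ ⊆ P, i.e., P has a saturation point. -/

import Mathlib

/-- The rational cone `σ∨ = ℚ≥0 · P` generated by a submonoid `P ⊆ ℤⁿ`:
since `P` is closed under addition, every nonnegative rational combination of elements of `P`
is a nonnegative rational multiple of a single element of `P`. -/
def coneOfMonoid {n : ℕ} (P : AddSubmonoid (Fin n → ℤ)) : Set (Fin n → ℚ) :=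
  {x | ∃ p ∈ P, ∃ q : ℚ, 0 ≤ q ∧ x = q • fun i => ((p i : ℤ) : ℚ)}

/-- Lemma 3.2: a finitely generated submonoid `P ⊆ ℤⁿ` generating `ℤⁿ` as a group
has a saturation point `d`, i.e. every lattice point of `d + σ∨` belongs to `P`. -/
theorem stmt3 {n : ℕ} (P : AddSubmonoid (Fin n → ℤ)) (hfg : P.FG)
    (hgen : AddSubgroup.closure (P : Set (Fin n → ℤ)) = ⊤) :
    ∃ d ∈ P, ∀ u : Fin n → ℤ,
      (fun i => ((u i - d i : ℤ) : ℚ)) ∈ coneOfMonoid P → u ∈ P := by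
  classical
  obtain ⟨S, hS⟩ := hfg
  -- Step 1: every integer vector is a difference of two elements of P
  have hdiff : ∀ x : Fin n → ℤ, ∃ c ∈ P, ∃ e ∈ P, x = c - e := by
    intro x
    have hx : x ∈ AddSubgroup.closure (P : Set (Fin n → ℤ)) := by
      rw [hgen]; exact AddSubgroup.mem_top x
    let G : AddSubgroup (Fin n → ℤ) :=
      { carrier := {z | ∃ c ∈ P, ∃ e ∈ P, z = c - e}
        zero_mem' := ⟨0, P.zero_mem, 0, P.zero_mem, by simp⟩
        add_mem' := by
          rintro a b ⟨c1, hc1, e1, he1, rfl⟩ ⟨c2, hc2, e2, he2, rfl⟩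
          exact ⟨c1 + c2, P.add_mem hc1 hc2, e1 + e2, P.add_mem he1 he2, by abel⟩
        neg_mem' := by
          rintro a ⟨c1, hc1, e1, he1, rfl⟩
          exact ⟨e1, he1, c1, hc1, by abel⟩ }
    have hle : AddSubgroup.closure (P : Set (Fin n → ℤ)) ≤ G :=
      (AddSubgroup.closure_le G).2 (fun y hy => ⟨y, hy, 0, P.zero_mem, by simp⟩)
    exact hle hx
  choose c hc e he hce using hdiff
  have hwe : ∀ x : Fin n → ℤ, x + e x ∈ P := by
    intro x
    have h : x + e x = c x := eq_sub_iff_add_eq.mp (hce x)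
    rw [h]; exact hc x
  -- Step 2: expressing elements of P as ℕ-combinations of the generators
  have hrep : ∀ p ∈ P, ∃ g : (Fin n → ℤ) → ℕ, p = ∑ y ∈ S, g y • y := by
    intro p hp
    have hp' : p ∈ AddSubmonoid.closure (S : Set (Fin n → ℤ)) := by rw [hS]; exact hp
    clear hp
    induction hp' using AddSubmonoid.closure_induction with
    | mem y hy =>
        refine ⟨fun z => if z = y then 1 else 0, ?_⟩
        simp only [ite_smul, one_smul, zero_smul]
        rw [Finset.sum_ite_eq' S y (fun z => z)]
        have : y ∈ S := hy
        simp [this]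
    | zero => exact ⟨fun _ => 0, by simp⟩
    | add a b ha hb iha ihb =>
        obtain ⟨g1, rfl⟩ := iha
        obtain ⟨g2, rfl⟩ := ihb
        exact ⟨g1 + g2, by simp [add_smul, Finset.sum_add_distrib]⟩
  -- the bounding box
  set B : Fin n → ℤ := fun j => ∑ y ∈ S, |y j| with hB
  set box : Finset (Fin n → ℤ) := Finset.Icc (-B) B with hbox
  set d : Fin n → ℤ := ∑ x ∈ box, e x with hd
  refine ⟨d, by rw [hd]; exact AddSubmonoid.sum_mem P (fun x _ => he x), ?_⟩
  intro u hcone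
  obtain ⟨p, hp, q, hq, hpq⟩ := hcone
  obtain ⟨g, hg⟩ := hrep p hp
  -- integer parts of the coefficients
  set m : (Fin n → ℤ) → ℕ := fun y => (⌊q * (g y : ℚ)⌋).toNat with hm
  have hmy : ∀ y : Fin n → ℤ, ((m y : ℤ) : ℚ) = (⌊q * (g y : ℚ)⌋ : ℚ) := by
    intro y
    have h0 : (0:ℚ) ≤ q * (g y : ℚ) := mul_nonneg hq (by positivity)
    have h1 : ((⌊q * (g y : ℚ)⌋.toNat : ℤ)) = ⌊q * (g y : ℚ)⌋ :=
      Int.toNat_of_nonneg (Int.floor_nonneg.2 h0)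
    rw [hm]
    exact_mod_cast congrArg (fun z : ℤ => (z : ℚ)) h1
  have hf0 : ∀ y : Fin n → ℤ, 0 ≤ q * (g y : ℚ) - ((m y : ℤ) : ℚ) := by
    intro y; rw [hmy y]; exact sub_nonneg.2 (Int.floor_le _)
  have hf1 : ∀ y : Fin n → ℤ, q * (g y : ℚ) - ((m y : ℤ) : ℚ) ≤ 1 := by
    intro y; rw [hmy y]
    have := Int.lt_floor_add_one (q * (g y : ℚ))
    linarith
  set a : Fin n → ℤ := ∑ y ∈ S, m y • y with ha
  have haP : a ∈ P := by
    rw [ha, ← hS]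
    exact AddSubmonoid.sum_mem _ fun y hy =>
      AddSubmonoid.nsmul_mem _ (AddSubmonoid.subset_closure hy) _
  set w : Fin n → ℤ := u - d - a with hw
  -- rational coordinates of w
  have hwQ : ∀ j, ((w j : ℤ) : ℚ)
      = ∑ y ∈ S, (q * (g y : ℚ) - ((m y : ℤ) : ℚ)) * ((y j : ℤ) : ℚ) := by
    intro j
    have h1 : ((u j - d j : ℤ) : ℚ) = q * ((p j : ℤ) : ℚ) := by
      have := congrFun hpq j
      simpa using this
    have hsm : ∀ (k : ℕ) (y : Fin n → ℤ), (((k • y : Fin n → ℤ) j : ℤ) : ℚ)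
        = (k : ℚ) * ((y j : ℤ) : ℚ) := by
      intro k y
      have : (k • y : Fin n → ℤ) j = (k : ℤ) * y j := by
        simp [Pi.smul_apply, nsmul_eq_mul]
      rw [this]; push_cast; ring
    have hpj : ((p j : ℤ) : ℚ) = ∑ y ∈ S, (g y : ℚ) * ((y j : ℤ) : ℚ) := by
      rw [hg, Finset.sum_apply, Int.cast_sum]
      exact Finset.sum_congr rfl fun y _ => hsm (g y) y
    have haj : ((a j : ℤ) : ℚ) = ∑ y ∈ S, ((m y : ℤ) : ℚ) * ((y j : ℤ) : ℚ) := by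
      rw [ha, Finset.sum_apply, Int.cast_sum]
      refine Finset.sum_congr rfl fun y _ => ?_
      rw [hsm (m y) y]; push_cast; ring
    have hwj : ((w j : ℤ) : ℚ) = ((u j - d j : ℤ) : ℚ) - ((a j : ℤ) : ℚ) := by
      rw [hw]
      have : (u - d - a) j = u j - d j - a j := rfl
      rw [this]; push_cast; ring
    rw [hwj, h1, hpj, haj, Finset.mul_sum, ← Finset.sum_sub_distrib]
    exact Finset.sum_congr rfl fun y _ => by ring
  -- w lies in the box
  have habs : ∀ j, |w j| ≤ B j := by
    intro j
    have hcast : |((w j : ℤ) : ℚ)| ≤ ((B j : ℤ) : ℚ) := by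
      rw [hwQ j]
      calc |∑ y ∈ S, (q * (g y : ℚ) - ((m y : ℤ) : ℚ)) * ((y j : ℤ) : ℚ)|
          ≤ ∑ y ∈ S, |(q * (g y : ℚ) - ((m y : ℤ) : ℚ)) * ((y j : ℤ) : ℚ)| :=
            Finset.abs_sum_le_sum_abs _ _
        _ ≤ ∑ y ∈ S, |((y j : ℤ) : ℚ)| := by
            refine Finset.sum_le_sum fun y _ => ?_
            rw [abs_mul]
            have h2 : |q * (g y : ℚ) - ((m y : ℤ) : ℚ)| ≤ 1 := by
              rw [abs_of_nonneg (hf0 y)]; exact hf1 y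
            nlinarith [abs_nonneg (((y j : ℤ) : ℚ)),
              abs_nonneg (q * (g y : ℚ) - ((m y : ℤ) : ℚ))]
        _ = ((B j : ℤ) : ℚ) := by
            rw [hB]
            show ∑ y ∈ S, |((y j : ℤ) : ℚ)| = ((∑ y ∈ S, |y j| : ℤ) : ℚ)
            push_cast
            rfl
    exact_mod_cast hcast
  have hwbox : w ∈ box := by
    rw [hbox, Finset.mem_Icc]
    constructor
    · rw [Pi.le_def]
      intro j
      have := (abs_le.1 (habs j)).1
      simpa using this
    · rw [Pi.le_def]
      intro j
      exact (abs_le.1 (habs j)).2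
  -- assemble
  have hsplit : d = e w + ∑ x ∈ box.erase w, e x := by
    rw [hd]; exact (Finset.add_sum_erase box e hwbox).symm
  have hu : u = a + (w + e w) + ∑ x ∈ box.erase w, e x := by
    have h4 : u = a + w + d := by rw [hw]; abel
    rw [h4, hsplit]; abel
  rw [hu]
  exact P.add_mem (P.add_mem haP (hwe w)) (AddSubmonoid.sum_mem _ fun x _ => he x)
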